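/- There is a bijection between the set RB(H, G, φ) of relative Rota-Baxter operators R: H → G with respect to the action φ, and the set S(H, G, φ) of subgroups M of G ⋉_φ H such that the projection onto the second coordinate restricts to a bijection M → H. The bijection sends R to its graph Gr(R) = {(R(h), h) | h ∈ H}, and conversely sends M to the map R_M defined by R_M(h) = the unique g with (g, h) ∈ M. -/

import Mathlib

namespace Stmt9Aux

variable {H G : Type*} [Group H] [Group G] (φ : G →* MulAut H)

lemma R_one (R : {R : H → G // ∀ h₁ h₂ : H, R h₁ * R h₂ = R (h₁ * φ (R h₁) h₂)}) :
    R.1 1 = 1 := by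
  have := R.2 1 1
  simp only [map_one, mul_one, one_mul] at this
  exact mul_eq_right.mp this

lemma R_inv (R : {R : H → G // ∀ h₁ h₂ : H, R h₁ * R h₂ = R (h₁ * φ (R h₁) h₂)}) (h : H) :
    R.1 (φ (R.1 h)⁻¹ h⁻¹) = (R.1 h)⁻¹ := by
  have := R.2 h (φ (R.1 h)⁻¹ h⁻¹)
  have h1 : φ (R.1 h) (φ (R.1 h)⁻¹ h⁻¹) = h⁻¹ := by
    simp
  rw [h1, mul_inv_cancel, R_one φ R] at this
  exact eq_inv_of_mul_eq_one_right this

def graph (R : {R : H → G // ∀ h₁ h₂ : H, R h₁ * R h₂ = R (h₁ * φ (R h₁) h₂)}) :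
    Subgroup (H ⋊[φ] G) where
  carrier := Set.range (fun h : H => (⟨h, R.1 h⟩ : H ⋊[φ] G))
  mul_mem' := by
    rintro _ _ ⟨h₁, rfl⟩ ⟨h₂, rfl⟩
    refine ⟨h₁ * φ (R.1 h₁) h₂, ?_⟩
    ext
    · rfl
    · exact (R.2 h₁ h₂).symm
  one_mem' := ⟨1, by
    ext
    · rfl
    · exact R_one φ R⟩
  inv_mem' := by
    rintro _ ⟨h, rfl⟩
    refine ⟨φ (R.1 h)⁻¹ h⁻¹, ?_⟩
    ext
    · rfl
    · exact R_inv φ R h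

lemma graph_bij (R : {R : H → G // ∀ h₁ h₂ : H, R h₁ * R h₂ = R (h₁ * φ (R h₁) h₂)}) :
    Function.Bijective (fun m : graph φ R => (m : H ⋊[φ] G).left) := by
  constructor
  · rintro ⟨_, h₁, rfl⟩ ⟨_, h₂, rfl⟩ e
    have : h₁ = h₂ := e
    subst this; rfl
  · intro h
    exact ⟨⟨⟨h, R.1 h⟩, ⟨h, rfl⟩⟩, rfl⟩

variable {φ}

section FromSub

variable (M : {M : Subgroup (H ⋊[φ] G) //
    Function.Bijective (fun m : M => (m : H ⋊[φ] G).left)})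

noncomputable def RM (h : H) : G :=
  (((Equiv.ofBijective _ M.2).symm h : M.1) : H ⋊[φ] G).right

lemma RM_mem (h : H) : (⟨h, RM M h⟩ : H ⋊[φ] G) ∈ M.1 := by
  have hl : (((Equiv.ofBijective _ M.2).symm h : M.1) : H ⋊[φ] G).left = h :=
    (Equiv.ofBijective _ M.2).apply_symm_apply h
  have hm := ((Equiv.ofBijective _ M.2).symm h : M.1).2
  convert hm using 1
  ext <;> simp [RM, hl]

lemma RM_eq {h : H} {g : G} (hm : (⟨h, g⟩ : H ⋊[φ] G) ∈ M.1) : RM M h = g := by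
  have h2 : (Equiv.ofBijective _ M.2).symm h = ⟨⟨h, g⟩, hm⟩ :=
    (Equiv.symm_apply_eq _).mpr rfl
  simp [RM, h2]

lemma RM_rb (h₁ h₂ : H) : RM M h₁ * RM M h₂ = RM M (h₁ * φ (RM M h₁) h₂) := by
  have hm : (⟨h₁ * φ (RM M h₁) h₂, RM M h₁ * RM M h₂⟩ : H ⋊[φ] G) ∈ M.1 :=
    mul_mem (RM_mem M h₁) (RM_mem M h₂)
  exact (RM_eq M hm).symm

end FromSub

end Stmt9Aux

open Stmt9Aux in
/-- There is a bijection between the set `RB(H, G, φ)` of relative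
Rota-Baxter operators `R : H → G` and the set `S(H, G, φ)` of subgroups `M` of
`G ⋉_φ H` for which projection to the `H`-coordinate is a bijection `M → H`.
The bijection sends `R` to its graph, and conversely sends `M` to `R_M`, the map
assigning to `h` the unique `g` with `(g, h) ∈ M`. -/
theorem stmt_9 {H G : Type*} [Group H] [Group G] (φ : G →* MulAut H) :
    ∃ e : {R : H → G // ∀ h₁ h₂ : H, R h₁ * R h₂ = R (h₁ * φ (R h₁) h₂)} ≃
          {M : Subgroup (H ⋊[φ] G) //
            Function.Bijective (fun m : M => (m : H ⋊[φ] G).left)},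
      (∀ R, (((e R).1 : Subgroup (H ⋊[φ] G)) : Set (H ⋊[φ] G))
          = Set.range (fun h : H => (⟨h, R.1 h⟩ : H ⋊[φ] G))) ∧
      (∀ M, ∀ h : H, (⟨h, (e.symm M).1 h⟩ : H ⋊[φ] G) ∈ M.1) := by
  refine ⟨⟨fun R => ⟨graph φ R, graph_bij φ R⟩,
    fun M => ⟨RM M, RM_rb M⟩, ?_, ?_⟩, fun R => rfl, fun M h => ?_⟩
  · intro R
    ext h
    exact RM_eq ⟨graph φ R, graph_bij φ R⟩ ⟨h, rfl⟩
  · intro M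
    ext x
    constructor
    · rintro ⟨h, rfl⟩
      exact RM_mem M h
    · intro hx
      refine ⟨x.left, ?_⟩
      have hx' : (⟨x.left, x.right⟩ : H ⋊[φ] G) ∈ M.1 := hx
      have := RM_eq M hx'
      ext
      · rfl
      · exact this
  · exact RM_mem M h
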